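/- Let n ≥ 1, let N ≡ 2 (mod 4) with N ≥ 6, and let μ ∈ ℤ^n. Then 2^n · Σ_{λ∈X_{N/2}} q^{(λ,λ)} S'_{λ,μ} = (Σ_{λ∈X_N} q^{(λ,λ+2ρ)}) · Q_μ · q^{−(μ,μ+2ρ)}, where throughout q^r = exp(2πi r/N). -/

import Mathlib

open Complex Finset

/-- `qp N r = exp(2πi r / N)`, i.e. `q^r` for `q = exp(2πi/N)`. -/
noncomputable def qp (N : ℕ) (r : ℚ) : ℂ :=
  Complex.exp (2 * (Real.pi : ℂ) * Complex.I * (r : ℂ) / (N : ℂ))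

/-- The Weyl vector of `osp(1|2n)`: `ρ_j = n - j + 1/2` for `j = 1, …, n`
(0-indexed: `ρ j = n - j - 1/2`). -/
def rhoV (n : ℕ) : Fin n → ℚ := fun j => (n : ℚ) - (j : ℚ) - 1/2

/-- The standard dot product on `ℚ^n`. -/
def dotp {n : ℕ} (x y : Fin n → ℚ) : ℚ := ∑ j, x j * y j

/-- Coercion of an integer vector to a rational vector. -/
def intC {n : ℕ} (lam : Fin n → ℤ) : Fin n → ℚ := fun j => (lam j : ℚ)

/-- Coercion of an element of `X_M = {0,…,M-1}^n` to a rational vector. -/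
def finC {n M : ℕ} (mu : Fin n → Fin M) : Fin n → ℚ := fun j => ((mu j : ℕ) : ℚ)

/-- The `j`-th standard basis vector of `ℚ^n`. -/
def stdB (n : ℕ) (j : Fin n) : Fin n → ℚ := fun l => if l = j then 1 else 0

/-- The hyperoctahedral group (Weyl group of `osp(1|2n)`): a permutation with signs. -/
abbrev HypOct (n : ℕ) := Equiv.Perm (Fin n) × (Fin n → ℤˣ)

/-- Action of the hyperoctahedral group on `ℚ^n` by signed permutation of coordinates. -/
def Wact {n : ℕ} (σ : HypOct n) (x : Fin n → ℚ) : Fin n → ℚ :=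
  fun j => ((σ.2 j : ℤ) : ℚ) * x (σ.1⁻¹ j)

/-- `ε'(σ) = sgn(π) · ∏_j s_j` for `σ = (π, s)`. -/
def epsW {n : ℕ} (σ : HypOct n) : ℤˣ :=
  Equiv.Perm.sign σ.1 * ∏ j, σ.2 j

/-- `S'_{λ,μ} = Σ_{σ∈W} ε'(σ) q^{2(λ+ρ, σ(μ+ρ))}` (for rational vectors `λ, μ`). -/
noncomputable def Sprime (n N : ℕ) (lam mu : Fin n → ℚ) : ℂ :=
  ∑ σ : HypOct n,
    ((epsW σ : ℤ) : ℂ) * qp N (2 * dotp (lam + rhoV n) (Wact σ (mu + rhoV n)))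

/-- `Q_μ = Σ_{σ∈W} ε'(σ) q^{2(ρ, σ(μ+ρ))}`. -/
noncomputable def Qmu (n N : ℕ) (mu : Fin n → ℤ) : ℂ :=
  ∑ σ : HypOct n,
    ((epsW σ : ℤ) : ℂ) * qp N (2 * dotp (rhoV n) (Wact σ (intC mu + rhoV n)))

/-- Gauss sum `G(N,m) = Σ_{j=0}^{N-1} q^{j(j+m)}` with `q = exp(2πi/N)`. -/
noncomputable def GaussG (N : ℕ) (m : ℤ) : ℂ :=
  ∑ j : Fin N, qp N ((j : ℚ) * ((j : ℚ) + (m : ℚ)))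

/-- `Σ_{μ ∈ X_M} q^{(μ, μ+2ρ)}` where `q = exp(2πi/N)`. -/
noncomputable def sumX (n N M : ℕ) : ℂ :=
  ∑ mu : Fin n → Fin M, qp N (dotp (finC mu) (finC mu + 2 • rhoV n))

/-- `Σ_{λ ∈ X_M} q^{(λ,λ)} S'_{λ,μ}` where `q = exp(2πi/N)`. -/
noncomputable def sumXS (n N M : ℕ) (mu : Fin n → ℤ) : ℂ :=
  ∑ lam : Fin n → Fin M, qp N (dotp (finC lam) (finC lam)) * Sprime n N (finC lam) (intC mu)

section Helpers
open Finset

lemma qp_eq (N : ℕ) (r : ℚ) :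
    qp N r = Complex.exp ((2 * (Real.pi : ℂ) * Complex.I / (N : ℂ)) * (r : ℂ)) := by
  unfold qp; congr 1; ring

lemma qp_add (N : ℕ) (r s : ℚ) : qp N (r + s) = qp N r * qp N s := by
  rw [qp_eq, qp_eq, qp_eq, ← Complex.exp_add]; congr 1; push_cast; ring

lemma qp_sum (N : ℕ) {ι : Type*} [Fintype ι] (f : ι → ℚ) :
    qp N (∑ j, f j) = ∏ j, qp N (f j) := by
  simp only [qp_eq]
  rw [← Complex.exp_sum]
  congr 1
  rw [← Finset.mul_sum]
  congr 1
  push_cast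
  rfl

lemma qp_int_mul (N : ℕ) (hN : N ≠ 0) (t : ℤ) : qp N ((N : ℚ) * (t : ℚ)) = 1 := by
  have hN' : (N : ℂ) ≠ 0 := Nat.cast_ne_zero.mpr hN
  rw [qp_eq]
  rw [show ((((N : ℚ) * (t : ℚ) : ℚ)) : ℂ) = (N : ℂ) * (t : ℂ) by push_cast; ring]
  rw [show (2 * (Real.pi : ℂ) * Complex.I / (N : ℂ)) * ((N : ℂ) * (t : ℂ))
      = (t : ℂ) * (2 * (Real.pi : ℂ) * Complex.I) by field_simp]
  exact Complex.exp_int_mul_two_pi_mul_I t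

lemma qp_nmul_add (N : ℕ) (hN : N ≠ 0) (r : ℚ) (t : ℤ) :
    qp N (r + (N : ℚ) * (t : ℚ)) = qp N r := by
  rw [qp_add, qp_int_mul N hN, mul_one]

end Helpers

section Shift
open Finset

lemma sum_fin_shift_one (N : ℕ) (h : ℤ → ℂ) (hper : ∀ m : ℤ, h (m + N) = h m) :
    ∑ a : Fin N, h ((a : ℕ) + 1) = ∑ a : Fin N, h ((a : ℕ)) := by
  rw [Fin.sum_univ_eq_sum_range (fun i : ℕ => h ((i : ℤ) + 1)) N,
      Fin.sum_univ_eq_sum_range (fun i : ℕ => h (i : ℤ)) N]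
  have h1 := Finset.sum_range_succ' (fun i : ℕ => h (i : ℤ)) N
  have h2 := Finset.sum_range_succ (fun i : ℕ => h (i : ℤ)) N
  have h3 : h (N : ℤ) = h 0 := by simpa using hper 0
  have h4 : ∀ i : ℕ, (((i + 1 : ℕ)) : ℤ) = (i : ℤ) + 1 := by intro i; push_cast; ring
  simp only [h4] at h1
  simp only [Nat.cast_zero] at h1
  linear_combination h2 - h1 + h3

lemma sum_fin_shift (N : ℕ) (h : ℤ → ℂ) (hper : ∀ m : ℤ, h (m + N) = h m) (k : ℤ) :
    ∑ a : Fin N, h ((a : ℕ) + k) = ∑ a : Fin N, h ((a : ℕ)) := by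
  induction k using Int.induction_on with
  | zero => simp
  | succ k ih =>
      have step := sum_fin_shift_one N (fun m => h (m + k))
        (fun m => by simpa only [add_right_comm] using hper (m + k))
      calc ∑ a : Fin N, h ((a : ℕ) + (k + 1))
          = ∑ a : Fin N, h (((a : ℕ) : ℤ) + 1 + k) := by
            apply Finset.sum_congr rfl; intro a _; congr 1; ring
        _ = ∑ a : Fin N, h ((a : ℕ) + k) := step
        _ = _ := ih
  | pred k ih =>
      have step := sum_fin_shift_one N (fun m => h (m + (-(k : ℤ) - 1)))
        (fun m => by simpa only [add_right_comm] using hper (m + (-(k : ℤ) - 1)))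
      calc ∑ a : Fin N, h ((a : ℕ) + (-(k : ℤ) - 1))
          = ∑ a : Fin N, h (((a : ℕ) : ℤ) + 1 + (-(k : ℤ) - 1)) := step.symm
        _ = ∑ a : Fin N, h ((a : ℕ) + (-(k : ℤ))) := by
            apply Finset.sum_congr rfl; intro a _; congr 1; ring
        _ = _ := ih

end Shift

section Gauss
open Finset

lemma sum_full (N : ℕ) (hN : N ≠ 0) (k : ℤ) :
    ∑ a : Fin N, qp N ((((a : ℕ) : ℚ) + ((k : ℚ) + 1/2))^2)
      = qp N (1/4) * GaussG N 1 := by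
  have hper : ∀ m : ℤ, (fun m : ℤ => qp N ((m : ℚ)^2 + (m : ℚ))) (m + N)
      = (fun m : ℤ => qp N ((m : ℚ)^2 + (m : ℚ))) m := by
    intro m
    simp only []
    rw [show (((m + N : ℤ)) : ℚ)^2 + ((m + N : ℤ) : ℚ)
        = ((m : ℚ)^2 + (m : ℚ)) + (N : ℚ) * (((2*m + N + 1 : ℤ)) : ℚ) by push_cast; ring]
    exact qp_nmul_add N hN _ _
  have hstep : ∀ a : Fin N, qp N ((((a : ℕ) : ℚ) + ((k : ℚ) + 1/2))^2)
      = qp N (1/4) * qp N (((((a : ℕ) : ℤ) + k : ℤ) : ℚ)^2 + ((((a : ℕ) : ℤ) + k : ℤ) : ℚ)) := by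
    intro a
    rw [← qp_add]
    congr 1
    push_cast
    ring
  simp only [hstep]
  rw [← Finset.mul_sum]
  congr 1
  have hs := sum_fin_shift N (fun m : ℤ => qp N ((m : ℚ)^2 + (m : ℚ))) hper k
  rw [hs]
  unfold GaussG
  apply Finset.sum_congr rfl
  intro j _
  congr 1
  push_cast
  ring

lemma sum_half (N : ℕ) (hN4 : N % 4 = 2) (k : ℤ) :
    (2 : ℂ) * ∑ a : Fin (N / 2), qp N ((((a : ℕ) : ℚ) + ((k : ℚ) + 1/2))^2)
      = ∑ a : Fin N, qp N ((((a : ℕ) : ℚ) + ((k : ℚ) + 1/2))^2) := by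
  obtain ⟨q, hq⟩ : ∃ q, N = 4 * q + 2 := ⟨N / 4, by omega⟩
  have hNne : N ≠ 0 := by omega
  have hM : N / 2 = 2 * q + 1 := by omega
  rw [Fin.sum_univ_eq_sum_range (fun i : ℕ => qp N (((i : ℚ) + ((k : ℚ) + 1/2))^2)) (N / 2),
      Fin.sum_univ_eq_sum_range (fun i : ℕ => qp N (((i : ℚ) + ((k : ℚ) + 1/2))^2)) N]
  have hsplit : ∑ i ∈ Finset.range N, qp N (((i : ℚ) + ((k : ℚ) + 1/2))^2)
      = (∑ i ∈ Finset.range (N / 2), qp N (((i : ℚ) + ((k : ℚ) + 1/2))^2))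
        + ∑ i ∈ Finset.range (N / 2), qp N ((((N / 2 + i : ℕ) : ℚ) + ((k : ℚ) + 1/2))^2) := by
    have := Finset.sum_range_add (fun i : ℕ => qp N (((i : ℚ) + ((k : ℚ) + 1/2))^2)) (N/2) (N/2)
    rw [show N / 2 + N / 2 = N from by omega] at this
    exact this
  have hshift : ∀ i : ℕ, qp N ((((N / 2 + i : ℕ) : ℚ) + ((k : ℚ) + 1/2))^2)
      = qp N (((i : ℚ) + ((k : ℚ) + 1/2))^2) := by
    intro i
    rw [show N / 2 + i = 2 * q + 1 + i from by omega]
    rw [show (((2 * q + 1 + i : ℕ) : ℚ) + ((k : ℚ) + 1/2))^2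
        = ((i : ℚ) + ((k : ℚ) + 1/2))^2 + (N : ℚ) * (((q : ℤ) + 1 + k + i : ℚ) : ℚ) from by
      rw [hq]; push_cast; ring]
    rw [show ((((q : ℤ) + 1 + k + i : ℚ)) : ℚ) = (((q + 1 + k + i : ℤ)) : ℚ) from by push_cast; ring]
    exact qp_nmul_add N hNne _ _
  rw [hsplit]
  simp only [hshift]
  ring

end Gauss

section Dotp
open Finset

lemma dotp_add_left {n : ℕ} (x y z : Fin n → ℚ) :
    dotp (x + y) z = dotp x z + dotp y z := by
  simp only [dotp, Pi.add_apply, add_mul, Finset.sum_add_distrib]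

lemma sum_sq_add {n : ℕ} (x y : Fin n → ℚ) :
    ∑ j, (x j + y j)^2 = dotp x x + 2 * dotp x y + dotp y y := by
  simp only [dotp, Finset.mul_sum, ← Finset.sum_add_distrib]
  apply Finset.sum_congr rfl
  intros
  ring

lemma dotp_Wact {n : ℕ} (σ : HypOct n) (x : Fin n → ℚ) :
    dotp (Wact σ x) (Wact σ x) = dotp x x := by
  unfold dotp Wact
  have h1 : ∀ j, (((σ.2 j : ℤ) : ℚ) * x (σ.1⁻¹ j)) * (((σ.2 j : ℤ) : ℚ) * x (σ.1⁻¹ j))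
      = x (σ.1⁻¹ j) * x (σ.1⁻¹ j) := by
    intro j
    rcases Int.units_eq_one_or (σ.2 j) with h | h <;> rw [h] <;> push_cast <;> ring
  simp only [h1]
  exact Equiv.sum_comp σ.1⁻¹ (fun j => x j * x j)

lemma dotp_shift {n : ℕ} (m : Fin n → ℚ) :
    dotp (m + rhoV n) (m + rhoV n)
      = dotp m (m + 2 • rhoV n) + dotp (rhoV n) (rhoV n) := by
  simp only [dotp, Pi.add_apply, Pi.smul_apply, smul_eq_mul, ← Finset.sum_add_distrib]
  apply Finset.sum_congr rfl
  intros
  ring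

lemma Wact_half {n : ℕ} (σ : HypOct n) (mu : Fin n → ℤ) (j : Fin n) :
    ∃ k : ℤ, Wact σ (intC mu + rhoV n) j = (k : ℚ) + 1/2 := by
  unfold Wact intC rhoV
  simp only [Pi.add_apply]
  rcases Int.units_eq_one_or (σ.2 j) with h | h
  · refine ⟨mu (σ.1⁻¹ j) + n - ((σ.1⁻¹ j : Fin n) : ℕ) - 1, ?_⟩
    rw [h]; push_cast; ring
  · refine ⟨-(mu (σ.1⁻¹ j)) - n + ((σ.1⁻¹ j : Fin n) : ℕ), ?_⟩
    rw [h]; push_cast; ring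

end Dotp

section Prod
open Finset

lemma lemA (n N : ℕ) (hN4 : N % 4 = 2) (v : Fin n → ℚ)
    (hv : ∀ j, ∃ k : ℤ, v j = (k : ℚ) + 1/2) :
    (2 : ℂ)^n * ∑ lam : Fin n → Fin (N / 2), qp N (∑ j, (finC lam j + v j)^2)
      = (qp N (1/4) * GaussG N 1)^n := by
  have hq : ∀ lam : Fin n → Fin (N / 2), qp N (∑ j, (finC lam j + v j)^2)
      = ∏ j, qp N ((finC lam j + v j)^2) := fun lam => qp_sum N _
  simp only [hq]
  simp only [finC]
  rw [← Fintype.prod_sum (fun (j : Fin n) (a : Fin (N / 2)) => qp N ((((a : ℕ) : ℚ) + v j)^2))]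
  rw [show (2 : ℂ)^n = ∏ _j : Fin n, (2 : ℂ) from by simp,
      show (qp N (1/4) * GaussG N 1)^n = ∏ _j : Fin n, (qp N (1/4) * GaussG N 1) from by simp,
      ← Finset.prod_mul_distrib]
  apply Finset.prod_congr rfl
  intro j _
  obtain ⟨k, hk⟩ := hv j
  simp only [hk]
  rw [sum_half N hN4 k, sum_full N (by omega) k]

lemma lemB (n N : ℕ) (hN : N ≠ 0) (v : Fin n → ℚ)
    (hv : ∀ j, ∃ k : ℤ, v j = (k : ℚ) + 1/2) :
    ∑ lam : Fin n → Fin N, qp N (∑ j, (finC lam j + v j)^2)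
      = (qp N (1/4) * GaussG N 1)^n := by
  have hq : ∀ lam : Fin n → Fin N, qp N (∑ j, (finC lam j + v j)^2)
      = ∏ j, qp N ((finC lam j + v j)^2) := fun lam => qp_sum N _
  simp only [hq]
  simp only [finC]
  rw [← Fintype.prod_sum (fun (j : Fin n) (a : Fin N) => qp N ((((a : ℕ) : ℚ) + v j)^2))]
  rw [show (qp N (1/4) * GaussG N 1)^n = ∏ _j : Fin n, (qp N (1/4) * GaussG N 1) from by simp]
  apply Finset.prod_congr rfl
  intro j _
  obtain ⟨k, hk⟩ := hv j
  simp only [hk]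
  rw [sum_full N hN k]

end Prod

section Main
open Finset

lemma rho_half (n : ℕ) : ∀ j : Fin n, ∃ k : ℤ, rhoV n j = (k : ℚ) + 1/2 := by
  intro j
  refine ⟨(n : ℤ) - ((j : Fin n) : ℕ) - 1, ?_⟩
  unfold rhoV
  push_cast
  ring

lemma sumX_eq (n N : ℕ) (hN : N ≠ 0) :
    sumX n N N = qp N (-(dotp (rhoV n) (rhoV n))) * (qp N (1/4) * GaussG N 1)^n := by
  unfold sumX
  have hexp : ∀ m : Fin n → Fin N, qp N (dotp (finC m) (finC m + 2 • rhoV n))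
      = qp N (∑ j, (finC m j + rhoV n j)^2) * qp N (-(dotp (rhoV n) (rhoV n))) := by
    intro m
    rw [← qp_add]
    congr 1
    have h2 : dotp (finC m + rhoV n) (finC m + rhoV n)
        = ∑ j, (finC m j + rhoV n j)^2 := by
      unfold dotp
      apply Finset.sum_congr rfl
      intros
      simp only [Pi.add_apply]
      ring
    have h3 := dotp_shift (finC m)
    rw [h2] at h3
    linear_combination -h3
  simp only [hexp]
  rw [← Finset.sum_mul, lemB n N hN (rhoV n) (rho_half n), mul_comm]

lemma key (n N : ℕ) (hN : 6 ≤ N) (hN4 : N % 4 = 2) (mu : Fin n → ℤ) (σ : HypOct n) :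
    (2 : ℂ)^n * ∑ lam : Fin n → Fin (N / 2),
        qp N (dotp (finC lam) (finC lam)
          + 2 * dotp (finC lam + rhoV n) (Wact σ (intC mu + rhoV n)))
      = qp N (2 * dotp (rhoV n) (Wact σ (intC mu + rhoV n)))
        * qp N (-(dotp (intC mu) (intC mu + 2 • rhoV n)))
        * qp N (-(dotp (rhoV n) (rhoV n)))
        * (qp N (1/4) * GaussG N 1)^n := by
  have hNne : N ≠ 0 := by omega
  set v := Wact σ (intC mu + rhoV n) with hv
  have hvv : dotp v v = dotp (intC mu) (intC mu + 2 • rhoV n) + dotp (rhoV n) (rhoV n) := by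
    rw [hv, dotp_Wact, dotp_shift]
  have hexp : ∀ lam : Fin n → Fin (N / 2),
      qp N (dotp (finC lam) (finC lam) + 2 * dotp (finC lam + rhoV n) v)
        = qp N (∑ j, (finC lam j + v j)^2)
          * (qp N (2 * dotp (rhoV n) v)
             * qp N (-(dotp (intC mu) (intC mu + 2 • rhoV n)))
             * qp N (-(dotp (rhoV n) (rhoV n)))) := by
    intro lam
    rw [← qp_add, ← qp_add, ← qp_add]
    congr 1
    rw [dotp_add_left, sum_sq_add]
    linear_combination -hvv
  simp only [hexp]
  rw [← Finset.sum_mul, ← mul_assoc,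
      lemA n N hN4 v (fun j => Wact_half σ mu j)]
  ring

/-- For `n ≥ 1`, `N ≡ 2 (mod 4)` with `N ≥ 6`, and `μ ∈ ℤ^n`,
`2^n · Σ_{λ∈X_{N/2}} q^{(λ,λ)} S'_{λ,μ} = (Σ_{λ∈X_N} q^{(λ,λ+2ρ)}) · Q_μ · q^{−(μ,μ+2ρ)}`
(with `q^r = exp(2πi r/N)` throughout). -/
theorem sumXS_half_eq (n N : ℕ) (hn : 1 ≤ n) (hN : 6 ≤ N) (hN4 : N % 4 = 2)
    (mu : Fin n → ℤ) :
    2 ^ n * sumXS n N (N / 2) mu =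
      sumX n N N * Qmu n N mu * qp N (-(dotp (intC mu) (intC mu + 2 • rhoV n))) := by
  have hNne : N ≠ 0 := by omega
  have hL : (2 : ℂ)^n * sumXS n N (N / 2) mu
      = ∑ σ : HypOct n, ((epsW σ : ℤ) : ℂ) * ((2 : ℂ)^n * ∑ lam : Fin n → Fin (N / 2),
          qp N (dotp (finC lam) (finC lam)
            + 2 * dotp (finC lam + rhoV n) (Wact σ (intC mu + rhoV n)))) := by
    unfold sumXS Sprime
    simp only [qp_add, Finset.mul_sum]
    rw [Finset.sum_comm]
    apply Finset.sum_congr rfl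
    intro σ _
    apply Finset.sum_congr rfl
    intro lam _
    ring
  rw [hL]
  have hK : ∀ σ : HypOct n, ((epsW σ : ℤ) : ℂ) * ((2 : ℂ)^n * ∑ lam : Fin n → Fin (N / 2),
        qp N (dotp (finC lam) (finC lam)
          + 2 * dotp (finC lam + rhoV n) (Wact σ (intC mu + rhoV n))))
      = ((epsW σ : ℤ) : ℂ) * (qp N (2 * dotp (rhoV n) (Wact σ (intC mu + rhoV n)))
          * qp N (-(dotp (intC mu) (intC mu + 2 • rhoV n)))
          * qp N (-(dotp (rhoV n) (rhoV n)))
          * (qp N (1/4) * GaussG N 1)^n) := by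
    intro σ
    rw [key n N hN hN4 mu σ]
  simp only [hK]
  rw [sumX_eq n N hNne]
  unfold Qmu
  rw [Finset.mul_sum, Finset.sum_mul]
  apply Finset.sum_congr rfl
  intro σ _
  ring
end Main
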